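/- Let P be a poset with least element 0 which is Z-directed, and let Z be a lower complete sublattice of P which is P-central, P-modular and Z-modular. If p ∈ P is ≾_Z-finite, then the maps q ↦ c_Z(q) and z ↦ p∧z (the infimum in P of p and z, which exists) are mutually inverse order isomorphisms between the interval [0,p] in P and the set [0,c_Z(p)] ∩ Z = {z ∈ Z : z ≤ c_Z(p)} with the order inherited from P. -/
import Mathlib


/-- `S` is `Z`-disjoint: there is `f : S → Z` with `p ≤ f p` and `f p ∧ f q = 0`
for distinct `p, q ∈ S`. -/
def ZDisjoint {β : Type*} [PartialOrder β] [OrderBot β] (Z S : Set β) : Prop :=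
  ∃ f : β → β, (∀ p ∈ S, f p ∈ Z ∧ p ≤ f p) ∧
    ∀ p ∈ S, ∀ q ∈ S, p ≠ q → Disjoint (f p) (f q)

/-- `I` is `Z`-complete: every `Z`-disjoint `S ⊆ I` has a supremum lying in `I`, and
whenever `{p, q}` is `Z`-disjoint with supremum in `I`, both `p` and `q` lie in `I`. -/
def ZComplete {β : Type*} [PartialOrder β] [OrderBot β] (Z I : Set β) : Prop :=
  (∀ S ⊆ I, ZDisjoint Z S → ∃ s, IsLUB S s ∧ s ∈ I) ∧
  (∀ p q s, ZDisjoint Z {p, q} → IsLUB {p, q} s → s ∈ I → p ∈ I ∧ q ∈ I)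

/-- `Z` is `S`-central: for every `p ∈ S` and `y ∈ Z` there is `z ∈ Z` with `y ∧ z = 0`
and `p` the supremum of some `q ≤ y` and `r ≤ z`. -/
def SCentral {β : Type*} [PartialOrder β] [OrderBot β] (Z S : Set β) : Prop :=
  ∀ p ∈ S, ∀ y ∈ Z, ∃ z ∈ Z, Disjoint y z ∧ ∃ q r, q ≤ y ∧ r ≤ z ∧ IsLUB {q, r} p
/-- `Z` is `P`-modular: disjoint pairs in `Z` are modular pairs. -/
def PModular {β : Type*} [PartialOrder β] [OrderBot β] (Z : Set β) : Prop :=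
  ∀ y ∈ Z, ∀ z ∈ Z, Disjoint y z →
    ∀ p q s, p ≤ y → q ≤ z → IsLUB {p, q} s → IsGLB {z, s} q
/-- `Z` is `Z`-modular: whenever `y, z ∈ Z` with `y ∧ z = 0`, `p, q ∈ Z` with `p ≤ y`,
`q ≤ z` and `p, q` have a least upper bound `s` within the subposet `Z`, then `q` is the
greatest lower bound within `Z` of `z` and `s`. -/
def ZModular {β : Type*} [PartialOrder β] [OrderBot β] (Z : Set β) : Prop :=
  ∀ y ∈ Z, ∀ z ∈ Z, Disjoint y z → ∀ p ∈ Z, ∀ q ∈ Z, p ≤ y → q ≤ z →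
    ∀ s ∈ Z, (p ≤ s ∧ q ≤ s ∧ ∀ w ∈ Z, p ≤ w → q ≤ w → s ≤ w) →
      (q ≤ s ∧ ∀ w ∈ Z, w ≤ z → w ≤ s → w ≤ q)
/-- Let `P` be `Z`-directed and `Z` a `P`-central, `P`-modular, `Z`-modular lower
complete sublattice of `P`, with `Z`-cover map `c`.  If `p` is `≾_Z`-finite then
`q ↦ c q` and `z ↦ p ∧ z` (which exists) are mutually inverse order isomorphisms
between the interval `[0, p]` in `P` and `[0, c p] ∩ Z` with the order from `P`. -/
theorem stmt16 {α : Type*} [PartialOrder α] [OrderBot α] (Z : Set α) (c : α → α)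
    (hdir : ∀ p q : α, ZDisjoint Z {p, q} → ∃ s, IsLUB {p, q} s)
    (hZl : ∀ S ⊆ Z, ∃ i, IsGLB S i ∧ i ∈ Z)
    (hc : ∀ p, c p ∈ Z ∧ IsGLB {z | z ∈ Z ∧ p ≤ z} (c p))
    (hcen : SCentral Z Set.univ) (hpm : PModular Z) (hzm : ZModular Z)
    (p : α) (hfin : ∀ q, q ≤ p → (∀ z ∈ Z, q ≤ z → p ≤ z) → p = q) :
    ∃ m : α → α,
      (∀ z, z ∈ Z → z ≤ c p → IsGLB {p, z} (m z) ∧ c (m z) = z) ∧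
      (∀ q, q ≤ p → c q ∈ Z ∧ c q ≤ c p ∧ m (c q) = q) ∧
      (∀ q q', q ≤ p → q' ≤ p → (q ≤ q' ↔ c q ≤ c q')) := by
  classical
  have hplecp : p ≤ c p := (hc p).2.2 (fun z hz => hz.2)
  have key : ∀ z ∈ Z, z ≤ c p → ∃ g, IsGLB {p, z} g ∧ c g = z := by
    intro z hzZ hzcp
    obtain ⟨z', hz'Z, hdis, q, r, hqz, hrz', hlub⟩ := hcen p (Set.mem_univ p) z hzZ
    have hglb : IsGLB {p, z} q := by
      have := hpm z' hz'Z z hzZ hdis.symm r q p hrz' hqz (by rwa [Set.pair_comm] at hlub)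
      rwa [Set.pair_comm] at this
    refine ⟨q, hglb, ?_⟩
    have hqcq : q ≤ c q := (hc q).2.2 (fun w hw => hw.2)
    have hcqz : c q ≤ z := (hc q).2.1 ⟨hzZ, hqz⟩
    obtain ⟨s, hsglb, hsZ⟩ := hZl {u | u ∈ Z ∧ c q ≤ u ∧ z' ≤ u} (fun u hu => hu.1)
    have hcqs : c q ≤ s := hsglb.2 (fun u hu => hu.2.1)
    have hz's : z' ≤ s := hsglb.2 (fun u hu => hu.2.2)
    have hps : p ≤ s := hlub.2 (by
      rintro x (rfl | rfl)
      · exact le_trans hqcq hcqs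
      · exact le_trans hrz' hz's)
    have hcps : c p ≤ s := (hc p).2.1 ⟨hsZ, hps⟩
    have hmod := hzm z' hz'Z z hzZ hdis.symm z' hz'Z (c q) (hc q).1 le_rfl hcqz s hsZ
      ⟨hz's, hcqs, fun w hwZ h1 h2 => hsglb.1 ⟨hwZ, h2, h1⟩⟩
    exact le_antisymm hcqz (hmod.2 z hzZ le_rfl (le_trans hzcp hcps))
  have key2 : ∀ q, q ≤ p → IsGLB {p, c q} q := by
    intro q hqp
    obtain ⟨z', hz'Z, hdis, q₁, r, hq₁, hrz', hlub⟩ := hcen p (Set.mem_univ p) (c q) (hc q).1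
    have hqcq : q ≤ c q := (hc q).2.2 (fun w hw => hw.2)
    have hrp : r ≤ p := hlub.1 (Or.inr rfl)
    have hzd : ZDisjoint Z {q, r} := by
      refine ⟨fun x => if x = q then c q else z', ?_, ?_⟩
      · intro x hx
        dsimp only
        by_cases h : x = q
        · rw [if_pos h]; exact ⟨(hc q).1, h ▸ hqcq⟩
        · rw [if_neg h]
          rcases hx with h' | h'
          · exact absurd h' h
          · exact h' ▸ ⟨hz'Z, hrz'⟩
      · intro a ha b hb hab
        dsimp only
        rcases ha with h1 | h1 <;> rcases hb with h2 | h2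
        · exact absurd (h1.trans h2.symm) hab
        · rw [if_pos h1, if_neg (fun hbq => hab (h1.trans hbq.symm))]; exact hdis
        · rw [if_neg (fun haq => hab (haq.trans h2.symm)), if_pos h2]; exact hdis.symm
        · exact absurd (h1.trans h2.symm) hab
    obtain ⟨s, hslub⟩ := hdir q r hzd
    have hsp : s ≤ p := hslub.2 (by rintro x (rfl | rfl); exacts [hqp, hrp])
    have hps : p = s := hfin s hsp (by
      intro w hwZ hsw
      have hqw : q ≤ w := le_trans (hslub.1 (Or.inl rfl)) hsw
      have hcqw : c q ≤ w := (hc q).2.1 ⟨hwZ, hqw⟩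
      have hrw : r ≤ w := le_trans (hslub.1 (Or.inr rfl)) hsw
      exact hlub.2 (by rintro x (rfl | rfl); exacts [le_trans hq₁ hcqw, hrw]))
    have hlub' : IsLUB {q, r} p := hps ▸ hslub
    have := hpm z' hz'Z (c q) (hc q).1 hdis.symm r q p hrz' hqcq
      (by rwa [Set.pair_comm] at hlub')
    rwa [Set.pair_comm] at this
  refine ⟨fun z => if h : z ∈ Z ∧ z ≤ c p then (key z h.1 h.2).choose else ⊥, ?_, ?_, ?_⟩
  · intro z hzZ hzcp
    have h : z ∈ Z ∧ z ≤ c p := ⟨hzZ, hzcp⟩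
    simp only [dif_pos h]
    exact (key z h.1 h.2).choose_spec
  · intro q hqp
    have hcqZ := (hc q).1
    have hcqcp : c q ≤ c p := (hc q).2.1 ⟨(hc p).1, le_trans hqp hplecp⟩
    refine ⟨hcqZ, hcqcp, ?_⟩
    have h : c q ∈ Z ∧ c q ≤ c p := ⟨hcqZ, hcqcp⟩
    simp only [dif_pos h]
    exact (key (c q) h.1 h.2).choose_spec.1.unique (key2 q hqp)
  · intro q q' hq hq'
    constructor
    · intro h
      exact (hc q).2.1 ⟨(hc q').1, le_trans h ((hc q').2.2 fun w hw => hw.2)⟩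
    · intro h
      exact (key2 q' hq').2 (by
        rintro x (rfl | rfl)
        exacts [hq, le_trans ((hc q).2.2 fun w hw => hw.2) h])
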